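/- Let n ≥ 1, k ≥ 1, and let f : {0,1}^n → {0,1} be a total Boolean function that depends on all n variables (i.e., for every index j ∈ [n] there exists x ∈ {0,1}^n with f(x) ≠ f(x ⊕ e^j)). Suppose there exist a unit vector ψ ∈ ℂ^{(n+1)^k} and a positive semidefinite matrix M on ℂ^{(n+1)^k} with M ≤ I such that ⟨ψ| O_x^{⊗k} M O_x^{⊗k} |ψ⟩ = 1 for every x with f(x)=0 and ⟨ψ| O_x^{⊗k} M O_x^{⊗k} |ψ⟩ = 0 for every x with f(x)=1 (i.e., the algorithm is exact). Then k ≥ n/2. -/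

import Mathlib

open Matrix
open scoped ComplexOrder

/-- Extend an `n`-bit string `x` to indices `0,…,n` with `x₀ := 0` (false). -/
noncomputable def extendBit {n : ℕ} (x : Fin n → Bool) : Fin (n + 1) → Bool :=
  Fin.cases false x

/-- The `k`-fold tensor power `O_x^{⊗k}` of the phase oracle of `x`:
the diagonal matrix on `ℂ^{(n+1)^k}` acting as
`O_x^{⊗k}|i₁,…,i_k⟩ = (−1)^{x_{i₁}+⋯+x_{i_k}}|i₁,…,i_k⟩`. -/
noncomputable def oracleK (n k : ℕ) (x : Fin n → Bool) :
    Matrix (Fin k → Fin (n + 1)) (Fin k → Fin (n + 1)) ℂ :=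
  Matrix.diagonal fun i => ∏ m, if extendBit x (i m) then (-1 : ℂ) else 1

/-- The diagonal entry of the oracle. -/
noncomputable def oracleD (n k : ℕ) (x : Fin n → Bool) (i : Fin k → Fin (n + 1)) : ℂ :=
  ∏ m, if extendBit x (i m) then (-1 : ℂ) else 1

lemma star_oracleD (n k : ℕ) (x : Fin n → Bool) (i : Fin k → Fin (n + 1)) :
    star (oracleD n k x i) = oracleD n k x i := by
  unfold oracleD
  rw [star_prod]
  refine Finset.prod_congr rfl fun m _ => ?_
  split <;> simp

lemma oracleD_mul_self (n k : ℕ) (x : Fin n → Bool) (i : Fin k → Fin (n + 1)) :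
    oracleD n k x i * oracleD n k x i = 1 := by
  unfold oracleD
  rw [← Finset.prod_mul_distrib]
  refine Finset.prod_eq_one fun m _ => ?_
  split <;> norm_num

lemma oracleK_eq (n k : ℕ) (x : Fin n → Bool) :
    oracleK n k x = Matrix.diagonal (oracleD n k x) := rfl

lemma oracleK_conjTranspose (n k : ℕ) (x : Fin n → Bool) :
    (oracleK n k x)ᴴ = oracleK n k x := by
  rw [oracleK_eq, Matrix.diagonal_conjTranspose]
  have : star (oracleD n k x) = oracleD n k x :=
    funext fun i => star_oracleD n k x i
  rw [this]

lemma oracleK_mul_self (n k : ℕ) (x : Fin n → Bool) :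
    oracleK n k x * oracleK n k x = 1 := by
  rw [oracleK_eq, Matrix.diagonal_mul_diagonal]
  have : (fun i => oracleD n k x i * oracleD n k x i)
      = fun _ : Fin k → Fin (n + 1) => (1 : ℂ) :=
    funext fun i => oracleD_mul_self n k x i
  rw [this, Matrix.diagonal_one]

lemma sign_mul_sign {n : ℕ} (x : Fin n → Bool) (j : Fin n) (a : Fin (n + 1)) :
    (if extendBit x a then (-1 : ℂ) else 1) *
      (if extendBit (Function.update x j (!x j)) a then (-1 : ℂ) else 1) =
    if a = j.succ then -1 else 1 := by
  induction a using Fin.cases with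
  | zero =>
    have h0 : ∀ y : Fin n → Bool, extendBit y 0 = false := fun y => by simp [extendBit]
    simp [h0, (Fin.succ_ne_zero j).symm]
  | succ b =>
    have h1 : ∀ y : Fin n → Bool, extendBit y b.succ = y b := fun y => by simp [extendBit]
    rw [h1, h1]
    rcases eq_or_ne b j with rfl | hbj
    · rw [Function.update_self]
      cases x b <;> simp
    · rw [Function.update_of_ne hbj]
      have hne : (b.succ : Fin (n + 1)) ≠ j.succ := fun h => hbj (Fin.succ_injective _ h)
      cases x b <;> simp [hne]

/-- Any *exact* nonadaptive quantum query algorithm `(ψ, M)` making `k`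
queries that computes a total boolean function `f` depending on all `n` variables
satisfies `k ≥ n/2`. -/
theorem exact_nonadaptive_quantum_computation_lower_bound
    (n k : ℕ) (hn : 1 ≤ n) (hk : 1 ≤ k)
    (f : (Fin n → Bool) → Bool)
    (hdep : ∀ j : Fin n, ∃ x : Fin n → Bool, f x ≠ f (Function.update x j (!x j)))
    (ψ : (Fin k → Fin (n + 1)) → ℂ) (hψ : ∑ i, ‖ψ i‖ ^ 2 = 1)
    (M : Matrix (Fin k → Fin (n + 1)) (Fin k → Fin (n + 1)) ℂ)
    (hM : M.PosSemidef) (hMI : (1 - M).PosSemidef)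
    (h0 : ∀ x, f x = false →
      star ψ ⬝ᵥ ((oracleK n k x * M * oracleK n k x) *ᵥ ψ) = 1)
    (h1 : ∀ x, f x = true →
      star ψ ⬝ᵥ ((oracleK n k x * M * oracleK n k x) *ᵥ ψ) = 0) :
    (n : ℝ) / 2 ≤ k := by
  classical
  set φ : (Fin n → Bool) → (Fin k → Fin (n + 1)) → ℂ :=
    fun x => oracleK n k x *ᵥ ψ with hφ
  have hφdef : ∀ x, φ x = oracleK n k x *ᵥ ψ := fun _ => rfl
  -- norm-squared of complex numbers
  have hsq : ∀ z : ℂ, star z * z = ((‖z‖ ^ 2 : ℝ) : ℂ) := fun z => by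
    rw [RCLike.star_def, Complex.normSq_eq_conj_mul_self.symm]
    simp [Complex.normSq_eq_norm_sq]
  have hψ1 : star ψ ⬝ᵥ ψ = 1 := by
    unfold dotProduct
    have h : ∀ i ∈ (Finset.univ : Finset (Fin k → Fin (n + 1))),
        star ψ i * ψ i = ((‖ψ i‖ ^ 2 : ℝ) : ℂ) := fun i _ => hsq (ψ i)
    rw [Finset.sum_congr rfl h, ← Complex.ofReal_sum, hψ, Complex.ofReal_one]
  -- star of φ
  have hstarφ : ∀ x, star (φ x) = star ψ ᵥ* oracleK n k x := by
    intro x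
    rw [hφdef, Matrix.star_mulVec, oracleK_conjTranspose]
  -- rewriting the quadratic form
  have hform : ∀ x, star ψ ⬝ᵥ ((oracleK n k x * M * oracleK n k x) *ᵥ ψ)
      = star (φ x) ⬝ᵥ (M *ᵥ φ x) := by
    intro x
    rw [← Matrix.mulVec_mulVec, ← Matrix.mulVec_mulVec,
      Matrix.dotProduct_mulVec (star ψ), ← hstarφ x, ← hφdef x]
  -- unit norm of φ
  have hφnorm : ∀ x, star (φ x) ⬝ᵥ φ x = 1 := by
    intro x
    rw [hstarφ, hφdef, Matrix.dotProduct_mulVec, Matrix.vecMul_vecMul,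
      oracleK_mul_self, Matrix.vecMul_one]
    exact hψ1
  -- f x = true : M kills φ x
  have hM0 : ∀ x, f x = true → M *ᵥ φ x = 0 := by
    intro x hx
    exact (hM.dotProduct_mulVec_zero_iff (φ x)).1 (by rw [← hform x]; exact h1 x hx)
  -- f x = false : φ x is fixed by M
  have hM1 : ∀ x, f x = false → M *ᵥ φ x = φ x := by
    intro x hx
    have h : (1 - M) *ᵥ φ x = 0 := by
      refine (hMI.dotProduct_mulVec_zero_iff (φ x)).1 ?_
      rw [Matrix.sub_mulVec, Matrix.one_mulVec, dotProduct_sub, hφnorm x, ← hform x,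
        h0 x hx, sub_self]
    rw [Matrix.sub_mulVec, Matrix.one_mulVec, sub_eq_zero] at h
    exact h.symm
  -- orthogonality
  have horth : ∀ x y, f x = false → f y = true → star (φ x) ⬝ᵥ φ y = 0 := by
    intro x y hx hy
    have hs : star (φ x) = star (φ x) ᵥ* M := by
      conv_lhs => rw [← hM1 x hx]
      rw [Matrix.star_mulVec, hM.isHermitian]
    rw [hs, ← Matrix.dotProduct_mulVec, hM0 y hy, dotProduct_zero]
  -- real signs
  set T : Fin n → (Fin k → Fin (n + 1)) → ℝ :=
    fun j i => ∏ m, if i m = j.succ then (-1 : ℝ) else 1 with hT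
  -- the key vanishing identity
  have key : ∀ j : Fin n, ∑ i, T j i * ‖ψ i‖ ^ 2 = 0 := by
    intro j
    obtain ⟨x, hx⟩ := hdep j
    set y : Fin n → Bool := Function.update x j (!x j) with hy
    have hip : star (φ x) ⬝ᵥ φ y = ((∑ i, T j i * ‖ψ i‖ ^ 2 : ℝ) : ℂ) := by
      unfold dotProduct
      rw [Complex.ofReal_sum]
      refine Finset.sum_congr rfl fun i _ => ?_
      have hx' : φ x i = oracleD n k x i * ψ i := by
        rw [hφdef x, oracleK_eq, Matrix.mulVec_diagonal]
      have hy' : φ y i = oracleD n k y i * ψ i := by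
        rw [hφdef y, oracleK_eq, Matrix.mulVec_diagonal]
      rw [Pi.star_apply, hx', hy', star_mul', star_oracleD, mul_mul_mul_comm]
      have hprod : oracleD n k x i * oracleD n k y i = ((T j i : ℝ) : ℂ) := by
        unfold oracleD
        rw [← Finset.prod_mul_distrib]
        simp only [hT]
        push_cast
        refine Finset.prod_congr rfl fun m _ => ?_
        rw [hy, sign_mul_sign x j (i m)]
        split <;> simp
      rw [hprod, hsq (ψ i), ← Complex.ofReal_mul]
    have hz : star (φ x) ⬝ᵥ φ y = 0 := by
      cases hfx : f x with
      | false =>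
        have hfy : f y = true := by
          cases hfy : f y
          · exact absurd (hfx.trans hfy.symm) hx
          · rfl
        exact horth x y hfx hfy
      | true =>
        have hfy : f y = false := by
          cases hfy : f y
          · rfl
          · exact absurd (hfx.trans hfy.symm) hx
        rw [Matrix.star_dotProduct, horth y x hfy hfx, star_zero]
    rw [hip] at hz
    exact_mod_cast hz
  -- T as a power of -1
  have hTpow : ∀ j i, T j i
      = (-1 : ℝ) ^ (Finset.univ.filter fun m => i m = j.succ).card := by
    intro j i
    simp only [hT]
    rw [← Finset.prod_filter, Finset.prod_const]
  -- counting bound: for each i, ∑_j (1 - T j i) ≤ 2k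
  have hbound : ∀ i : Fin k → Fin (n + 1), ∑ j : Fin n, (1 - T j i) ≤ 2 * k := by
    intro i
    have hterm : ∀ j : Fin n, 1 - T j i
        ≤ 2 * ((Finset.univ.filter fun m => i m = j.succ).card : ℝ) := by
      intro j
      rw [hTpow]
      rcases Nat.eq_zero_or_pos (Finset.univ.filter fun m => i m = j.succ).card with h | h
      · rw [h]; norm_num
      · have h1 : (1 : ℝ) ≤ ((Finset.univ.filter fun m => i m = j.succ).card : ℝ) := by
          exact_mod_cast h
        rcases Nat.even_or_odd ((Finset.univ.filter fun m => i m = j.succ).card) with h' | h'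
        · rw [h'.neg_one_pow]; linarith
        · rw [h'.neg_one_pow]; linarith
    have hcsum : ∑ j : Fin n, (Finset.univ.filter fun m => i m = j.succ).card ≤ k := by
      have h := Finset.card_eq_sum_card_fiberwise (f := i) (s := Finset.univ)
        (t := Finset.univ) (fun x _ => Finset.mem_univ _)
      rw [Finset.card_univ, Fintype.card_fin, Fin.sum_univ_succ] at h
      omega
    calc ∑ j : Fin n, (1 - T j i)
        ≤ ∑ j : Fin n, 2 * ((Finset.univ.filter fun m => i m = j.succ).card : ℝ) :=
          Finset.sum_le_sum fun j _ => hterm j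
      _ = 2 * ((∑ j : Fin n, (Finset.univ.filter fun m => i m = j.succ).card : ℕ) : ℝ) := by
          push_cast
          rw [Finset.mul_sum]
      _ ≤ 2 * (k : ℝ) := by
          have h2 : ((∑ j : Fin n, (Finset.univ.filter fun m => i m = j.succ).card : ℕ) : ℝ)
              ≤ (k : ℝ) := by exact_mod_cast hcsum
          linarith
  -- putting it together
  have hmain : (n : ℝ) ≤ 2 * k := by
    have h1' : (n : ℝ) = ∑ j : Fin n, ∑ i, (1 - T j i) * ‖ψ i‖ ^ 2 := by
      have hone : ∀ j : Fin n, ∑ i, (1 - T j i) * ‖ψ i‖ ^ 2 = 1 := by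
        intro j
        have hsplit : ∑ i, (1 - T j i) * ‖ψ i‖ ^ 2
            = ∑ i, ‖ψ i‖ ^ 2 - ∑ i, T j i * ‖ψ i‖ ^ 2 := by
          rw [← Finset.sum_sub_distrib]
          exact Finset.sum_congr rfl fun i _ => by ring
        rw [hsplit, key j, hψ, sub_zero]
      rw [Finset.sum_congr rfl fun j _ => hone j]
      simp
    rw [h1', Finset.sum_comm]
    calc ∑ i, ∑ j : Fin n, (1 - T j i) * ‖ψ i‖ ^ 2
        = ∑ i, (∑ j : Fin n, (1 - T j i)) * ‖ψ i‖ ^ 2 := by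
          refine Finset.sum_congr rfl fun i _ => ?_
          rw [Finset.sum_mul]
      _ ≤ ∑ i, (2 * k) * ‖ψ i‖ ^ 2 := by
          refine Finset.sum_le_sum fun i _ => ?_
          exact mul_le_mul_of_nonneg_right (hbound i) (sq_nonneg _)
      _ = 2 * k := by rw [← Finset.mul_sum, hψ, mul_one]
  linarith
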